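/- If |H| is a unit in A, then e_H := (1/|H|) Σ_{h∈H} 1_A ⊗ h is an idempotent in the skew group algebra A ⋊ G, and the skew Hecke algebra H_R(G,H,A,α) is isomorphic as an R-algebra to the corner ring e_H (A ⋊ G) e_H. -/
import Mathlib


open scoped BigOperators

def SkewHecke.IsInv {R A G : Type*} [CommRing R] [Ring A] [Algebra R A] [Group G]
    (H : Subgroup G) (α : G →* (A ≃ₐ[R] A)) (φ : G ⧸ H → A) : Prop :=
  ∀ h ∈ H, ∀ g : G, φ (QuotientGroup.mk (h * g)) = α h (φ (QuotientGroup.mk g))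

def SkewHecke.IsSection {G : Type*} [Group G] {H : Subgroup G} (s : G ⧸ H → G) : Prop :=
  ∀ c : G ⧸ H, QuotientGroup.mk (s c) = c

/-- Convolution product on the skew Hecke algebra `Maps(G/H,A)^H`. -/
noncomputable def SkewHecke.conv {R A G : Type*} [CommRing R] [Ring A] [Algebra R A] [Group G]
    (H : Subgroup G) [Fintype (G ⧸ H)] (α : G →* (A ≃ₐ[R] A))
    (s : G ⧸ H → G) (φ ψ : G ⧸ H → A) : G ⧸ H → A :=
  fun x => ∑ c : G ⧸ H, φ c * α (s c) (ψ ((s c)⁻¹ • x))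

/-- Convolution product on the skew group algebra `Maps(G,A) ≅ A ⋊ G`. -/
noncomputable def SkewHecke.convG {R A G : Type*} [CommRing R] [Ring A] [Algebra R A] [Group G]
    [Fintype G] (α : G →* (A ≃ₐ[R] A)) (Φ Ψ : G → A) : G → A :=
  fun g => ∑ k : G, Φ k * α k (Ψ (k⁻¹ * g))

/-- `δ_{H,a}`: the function with value `a` at the identity coset and `0` elsewhere. -/
noncomputable def SkewHecke.delta {A G : Type*} [Ring A] [Group G] (H : Subgroup G)
    (a : A) : G ⧸ H → A := by
  classical exact fun x => if x = QuotientGroup.mk (1 : G) then a else 0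

/-- `e_H = (1/|H|) Σ_{h ∈ H} 1_A ⊗ h`, as an element of `Maps(G,A) ≅ A ⋊ G`. -/
noncomputable def SkewHecke.eH {A G : Type*} [Ring A] [Group G] (H : Subgroup G)
    (v : A) : G → A := by
  classical exact fun g => if g ∈ H then v else 0

/-- With a section `s`, `(G ⧸ H) × H ≃ G`. -/
def SkewHecke.prodEquiv {G : Type*} [Group G] (H : Subgroup G)
    (s : G ⧸ H → G) (hs : SkewHecke.IsSection s) : (G ⧸ H) × H ≃ G where
  toFun := fun p => s p.1 * p.2
  invFun := fun k => (QuotientGroup.mk k,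
    ⟨(s (QuotientGroup.mk k))⁻¹ * k, QuotientGroup.eq.mp (hs (QuotientGroup.mk k))⟩)
  left_inv := fun p => by
    have h1 : (QuotientGroup.mk (s p.1 * (p.2 : G)) : G ⧸ H) = p.1 := by
      rw [QuotientGroup.mk_mul_of_mem _ p.2.2, hs]
    ext
    · exact h1
    · simp [h1]
  right_inv := fun k => by simp

/-- If `|H|` is a unit in `A`, then `e_H = (1/|H|)Σ_{h∈H} 1_A ⊗ h` is an idempotent in the
skew group algebra `A ⋊ G ≅ Maps(G,A)`, and the skew Hecke algebra is isomorphic as an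
`R`-algebra to the corner ring `e_H (A ⋊ G) e_H`. -/
theorem skewHecke_iso_corner_ring {R A G : Type*} [CommRing R] [Ring A]
    [Algebra R A] [Group G] [Fintype G] (H : Subgroup G) [Fintype H] [Fintype (G ⧸ H)]
    (α : G →* (A ≃ₐ[R] A)) (s : G ⧸ H → G) (hs : SkewHecke.IsSection s)
    (u : Aˣ) (hu : (u : A) = (Fintype.card H : A)) :
    let eH : G → A := SkewHecke.eH H (↑u⁻¹ : A)
    let e : (G ⧸ H → A) → (G → A) := fun φ g => (↑u⁻¹ : A) * φ (QuotientGroup.mk g)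
    -- `e_H` is an idempotent in `A ⋊ G`
    SkewHecke.convG α eH eH = eH ∧
    -- `e` is a bijection from the skew Hecke algebra onto the corner ring `e_H (A ⋊ G) e_H`
    Set.BijOn e {φ | SkewHecke.IsInv H α φ}
      {Φ : G → A | SkewHecke.convG α eH (SkewHecke.convG α Φ eH) = Φ} ∧
    -- `e` is `R`-linear
    (∀ φ ψ : G ⧸ H → A, e (φ + ψ) = e φ + e ψ) ∧
    (∀ (r : R) (φ : G ⧸ H → A), e (r • φ) = r • e φ) ∧
    -- `e` is multiplicative
    (∀ φ ψ : G ⧸ H → A, SkewHecke.IsInv H α φ → SkewHecke.IsInv H α ψ →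
      e (SkewHecke.conv H α s φ ψ) = SkewHecke.convG α (e φ) (e ψ)) ∧
    -- `e` maps the identity of the skew Hecke algebra to `e_H`, the identity of the corner
    e (SkewHecke.delta H (1 : A)) = eH := by
  classical
  intro eH e
  -- basic facts about `u`
  have hcomm : ∀ a : A, (↑u⁻¹ : A) * a = a * ↑u⁻¹ := by
    intro a
    have h1 : Commute a (↑u : A) := by
      rw [hu]; exact (Nat.cast_commute _ a).symm
    exact (h1.units_inv_right).symm
  have hαu : ∀ k : G, α k (↑u : A) = ↑u := by
    intro k; rw [hu]; exact map_natCast (α k) _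
  have hαv : ∀ k : G, α k (↑u⁻¹ : A) = ↑u⁻¹ := by
    intro k
    calc α k (↑u⁻¹ : A) = α k ↑u⁻¹ * (↑u * ↑u⁻¹) := by rw [Units.mul_inv, mul_one]
      _ = (α k ↑u⁻¹ * α k ↑u) * ↑u⁻¹ := by rw [hαu, mul_assoc]
      _ = ↑u⁻¹ := by rw [← map_mul, Units.inv_mul, map_one, one_mul]
  have hkey : ∀ a : A, (Fintype.card H) • ((↑u⁻¹ : A) * a) = a := by
    intro a
    rw [nsmul_eq_mul, ← mul_assoc, ← hu, Units.mul_inv, one_mul]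
  have hre : ∀ a b : A, ((↑u⁻¹ : A) * a) * (↑u⁻¹ * b) = ↑u⁻¹ * (↑u⁻¹ * (a * b)) := by
    intro a b
    rw [mul_assoc, ← mul_assoc a, ← hcomm a, mul_assoc, ← mul_assoc]
  -- sums of functions supported on `H` or on a left coset
  have sum_mem : ∀ f : G → A,
      (∑ k : G, if k ∈ H then f k else 0) = ∑ h : H, f h := by
    intro f
    rw [← Finset.sum_filter]
    exact Finset.sum_subtype _ (by simp) f
  have sum_coset : ∀ (g : G) (f : G → A),
      (∑ k : G, if (QuotientGroup.mk k : G ⧸ H) = QuotientGroup.mk g then f k else 0)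
        = ∑ h : H, f (g * h) := by
    intro g f
    have h1 : (∑ k : G, if (QuotientGroup.mk k : G ⧸ H) = QuotientGroup.mk g then f k else 0)
        = ∑ k : {k : G // (QuotientGroup.mk k : G ⧸ H) = QuotientGroup.mk g}, f k := by
      rw [← Finset.sum_filter]
      exact Finset.sum_subtype _ (by simp) f
    rw [h1]
    refine Fintype.sum_equiv ?_ _ _ ?_
    · exact {
        toFun := fun k => ⟨g⁻¹ * k, by
          have := QuotientGroup.eq.mp k.2.symm; simpa using this⟩
        invFun := fun h => ⟨g * h, QuotientGroup.mk_mul_of_mem g h.2⟩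
        left_inv := fun k => by ext; simp
        right_inv := fun h => by ext; simp }
    · intro k
      show f (k : G) = f (g * (g⁻¹ * (k : G)))
      rw [mul_inv_cancel_left]
  -- the two basic convolution formulas
  have keyR : ∀ (Φ : G → A) (g : G),
      SkewHecke.convG α Φ eH g = (∑ h : H, Φ (g * h)) * ↑u⁻¹ := by
    intro Φ g
    show (∑ k : G, Φ k * α k (eH (k⁻¹ * g))) = _
    have step : ∀ k : G, Φ k * α k (eH (k⁻¹ * g))
        = if (QuotientGroup.mk k : G ⧸ H) = QuotientGroup.mk g then Φ k * ↑u⁻¹ else 0 := by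
      intro k
      show Φ k * α k (if k⁻¹ * g ∈ H then (↑u⁻¹ : A) else 0) = _
      by_cases hk : k⁻¹ * g ∈ H
      · rw [if_pos hk, if_pos (QuotientGroup.eq.mpr hk), hαv]
      · rw [if_neg hk, if_neg (fun hc => hk (QuotientGroup.eq.mp hc)), map_zero, mul_zero]
    rw [Finset.sum_congr rfl (fun k _ => step k), sum_coset, ← Finset.sum_mul]
  have keyL : ∀ (Ψ : G → A) (g : G),
      SkewHecke.convG α eH Ψ g = ∑ h : H, ↑u⁻¹ * α h (Ψ ((h : G)⁻¹ * g)) := by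
    intro Ψ g
    show (∑ k : G, eH k * α k (Ψ (k⁻¹ * g))) = _
    have step : ∀ k : G, eH k * α k (Ψ (k⁻¹ * g))
        = if k ∈ H then ↑u⁻¹ * α k (Ψ (k⁻¹ * g)) else 0 := by
      intro k
      show (if k ∈ H then (↑u⁻¹ : A) else 0) * α k (Ψ (k⁻¹ * g)) = _
      split_ifs <;> simp
    rw [Finset.sum_congr rfl (fun k _ => step k), sum_mem]
  -- e_H is idempotent
  have idem : SkewHecke.convG α eH eH = eH := by
    funext g
    rw [keyL]
    have step : ∀ h : H, (↑u⁻¹ : A) * α h (eH ((h : G)⁻¹ * g))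
        = if g ∈ H then ((↑u⁻¹ : A) * (↑u⁻¹ : A)) else 0 := by
      intro h
      show (↑u⁻¹ : A) * α h (if (h : G)⁻¹ * g ∈ H then (↑u⁻¹ : A) else 0) = _
      rw [H.mul_mem_cancel_left (H.inv_mem h.2)]
      split_ifs
      · rw [hαv]
      · simp
    rw [Finset.sum_congr rfl (fun h _ => step h)]
    show _ = if g ∈ H then (↑u⁻¹ : A) else 0
    by_cases hg : g ∈ H
    · simp only [if_pos hg, Finset.sum_const, Finset.card_univ]
      exact hkey _
    · simp [if_neg hg]
  -- corner elements are right H-invariant and left H-equivariant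
  have rinv : ∀ (Φ : G → A) (g : G), ∀ h ∈ H,
      SkewHecke.convG α Φ eH (g * h) = SkewHecke.convG α Φ eH g := by
    intro Φ g h hh
    rw [keyR, keyR]
    congr 1
    refine Fintype.sum_equiv (Equiv.mulLeft (⟨h, hh⟩ : H)) _ _ ?_
    intro h'
    show Φ (g * h * h') = Φ (g * (((⟨h, hh⟩ : H) * h' : H) : G))
    rw [Subgroup.coe_mul, ← mul_assoc]
  have lequiv : ∀ (Ψ : G → A) (g : G), ∀ h ∈ H,
      SkewHecke.convG α eH Ψ (h * g) = α h (SkewHecke.convG α eH Ψ g) := by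
    intro Ψ g h hh
    rw [keyL, keyL, map_sum]
    refine (Fintype.sum_equiv (Equiv.mulLeft (⟨h, hh⟩ : H)) _ _ ?_).symm
    intro h'
    show α h ((↑u⁻¹ : A) * α h' (Ψ ((h' : G)⁻¹ * g)))
      = ↑u⁻¹ * α (((⟨h, hh⟩ : H) * h' : H) : G)
          (Ψ ((((⟨h, hh⟩ : H) * h' : H) : G)⁻¹ * (h * g)))
    have hc : (((⟨h, hh⟩ : H) * h' : H) : G) = h * h' := rfl
    rw [map_mul, hαv, hc, mul_inv_rev, mul_assoc, inv_mul_cancel_left, map_mul α,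
      AlgEquiv.mul_apply]
  refine ⟨idem, ⟨?_, ?_, ?_⟩, ?_, ?_, ?_, ?_⟩
  · -- MapsTo
    intro φ hφ
    have hφ' : SkewHecke.IsInv H α φ := hφ
    show SkewHecke.convG α eH (SkewHecke.convG α (e φ) eH) = e φ
    have h1 : SkewHecke.convG α (e φ) eH = e φ := by
      funext g
      rw [keyR]
      have step : ∀ h : H, (e φ) (g * h) = ↑u⁻¹ * φ (QuotientGroup.mk g) := by
        intro h
        show (↑u⁻¹ : A) * φ (QuotientGroup.mk (g * h)) = _
        rw [QuotientGroup.mk_mul_of_mem g h.2]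
      rw [Finset.sum_congr rfl (fun h _ => step h), Finset.sum_const, Finset.card_univ,
        hkey, ← hcomm]
    rw [h1]
    funext g
    rw [keyL]
    have step : ∀ h : H, (↑u⁻¹ : A) * α h ((e φ) ((h : G)⁻¹ * g))
        = ↑u⁻¹ * (↑u⁻¹ * φ (QuotientGroup.mk g)) := by
      intro h
      show (↑u⁻¹ : A) * α h (↑u⁻¹ * φ (QuotientGroup.mk ((h : G)⁻¹ * g))) = _
      rw [map_mul, hαv]
      have h2 := hφ' (h : G) h.2 ((h : G)⁻¹ * g)
      rw [mul_inv_cancel_left] at h2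
      rw [← h2]
    rw [Finset.sum_congr rfl (fun h _ => step h), Finset.sum_const, Finset.card_univ, hkey]
  · -- InjOn
    intro φ _ ψ _ hEq
    funext c
    obtain ⟨g, rfl⟩ := QuotientGroup.mk_surjective c
    have h1 := congrFun hEq g
    exact ((Units.mul_right_inj u⁻¹).mp h1)
  · -- SurjOn
    intro Φ hΦ
    have hΦ' : SkewHecke.convG α eH (SkewHecke.convG α Φ eH) = Φ := hΦ
    have hR : ∀ (g : G), ∀ h ∈ H, Φ (g * h) = Φ g := by
      intro g h hh
      conv_lhs => rw [← hΦ']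
      conv_rhs => rw [← hΦ']
      rw [keyL, keyL]
      refine Finset.sum_congr rfl fun h' _ => ?_
      rw [← mul_assoc, rinv Φ _ h hh]
    have hL : ∀ (g : G), ∀ h ∈ H, Φ (h * g) = α h (Φ g) := by
      intro g h hh
      conv_lhs => rw [← hΦ']
      rw [lequiv (SkewHecke.convG α Φ eH) g h hh, hΦ']
    have hsec : ∀ g : G, Φ (s (QuotientGroup.mk g)) = Φ g := by
      intro g
      have h2 : g⁻¹ * s (QuotientGroup.mk g) ∈ H :=
        QuotientGroup.eq.mp (hs (QuotientGroup.mk g)).symm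
      have h3 := hR g _ h2
      rw [mul_inv_cancel_left] at h3
      exact h3
    refine ⟨fun c => ↑u * Φ (s c), ?_, ?_⟩
    · show SkewHecke.IsInv H α fun c => ↑u * Φ (s c)
      intro h hh g
      show ↑u * Φ (s (QuotientGroup.mk (h * g))) = α h (↑u * Φ (s (QuotientGroup.mk g)))
      rw [hsec (h * g), hsec g, hL g h hh, map_mul, hαu]
    · funext g
      show (↑u⁻¹ : A) * (↑u * Φ (s (QuotientGroup.mk g))) = Φ g
      rw [hsec, ← mul_assoc, Units.inv_mul, one_mul]
  · -- additive
    intro φ ψ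
    funext g
    show (↑u⁻¹ : A) * (φ (QuotientGroup.mk g) + ψ (QuotientGroup.mk g)) = _
    rw [mul_add]
    rfl
  · -- R-linear
    intro r φ
    funext g
    show (↑u⁻¹ : A) * (r • φ (QuotientGroup.mk g)) = r • ((↑u⁻¹ : A) * φ (QuotientGroup.mk g))
    rw [mul_smul_comm]
  · -- multiplicative
    intro φ ψ hφ hψ
    funext g
    show (↑u⁻¹ : A) * SkewHecke.conv H α s φ ψ (QuotientGroup.mk g)
      = ∑ k : G, (e φ) k * α k ((e ψ) (k⁻¹ * g))
    rw [← Equiv.sum_comp (SkewHecke.prodEquiv H s hs)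
      (fun k => (e φ) k * α k ((e ψ) (k⁻¹ * g))), Fintype.sum_prod_type]
    have inner : ∀ c : G ⧸ H,
        (∑ h : H, (e φ) (SkewHecke.prodEquiv H s hs (c, h))
          * α (SkewHecke.prodEquiv H s hs (c, h)) ((e ψ)
            ((SkewHecke.prodEquiv H s hs (c, h))⁻¹ * g)))
        = ↑u⁻¹ * (φ c * α (s c) (ψ (QuotientGroup.mk ((s c)⁻¹ * g)))) := by
      intro c
      have step : ∀ h : H, (e φ) (SkewHecke.prodEquiv H s hs (c, h))
          * α (SkewHecke.prodEquiv H s hs (c, h)) ((e ψ)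
            ((SkewHecke.prodEquiv H s hs (c, h))⁻¹ * g))
          = ↑u⁻¹ * (↑u⁻¹ * (φ c * α (s c) (ψ (QuotientGroup.mk ((s c)⁻¹ * g))))) := by
        intro h
        show ((↑u⁻¹ : A) * φ (QuotientGroup.mk (s c * (h : G))))
          * α (s c * (h : G)) (↑u⁻¹ * ψ (QuotientGroup.mk ((s c * (h : G))⁻¹ * g))) = _
        have hc : (QuotientGroup.mk (s c * (h : G)) : G ⧸ H) = c := by
          rw [QuotientGroup.mk_mul_of_mem _ h.2, hs]
        have harg : (s c * (h : G))⁻¹ * g = (h : G)⁻¹ * ((s c)⁻¹ * g) := by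
          rw [mul_inv_rev, mul_assoc]
        have hψ' := hψ (h : G) h.2 ((h : G)⁻¹ * ((s c)⁻¹ * g))
        rw [mul_inv_cancel_left] at hψ'
        rw [hc, harg, map_mul, hαv, map_mul α, AlgEquiv.mul_apply, ← hψ', hre]
      rw [Finset.sum_congr rfl (fun h _ => step h), Finset.sum_const, Finset.card_univ, hkey]
    rw [Finset.sum_congr rfl (fun c _ => inner c), ← Finset.mul_sum]
    rfl
  · -- unit
    funext g
    show (↑u⁻¹ : A) * SkewHecke.delta H (1 : A) (QuotientGroup.mk g)
      = (if g ∈ H then (↑u⁻¹ : A) else 0)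
    show (↑u⁻¹ : A) * (if (QuotientGroup.mk g : G ⧸ H) = QuotientGroup.mk (1 : G)
      then (1 : A) else 0) = _
    have hiff : (QuotientGroup.mk g : G ⧸ H) = QuotientGroup.mk (1 : G) ↔ g ∈ H := by
      rw [QuotientGroup.eq]
      simp
    by_cases hg : g ∈ H
    · rw [if_pos (hiff.mpr hg), if_pos hg, mul_one]
    · rw [if_neg (fun hc => hg (hiff.mp hc)), if_neg hg, mul_zero]
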